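/- Let Σ_u = (σ_{ij}) be a real symmetric positive semidefinite p×p matrix and let q ∈ [0,1]. Then ‖Σ_u‖ ≤ ‖Σ_u‖₁ ≤ max_{i ≤ p} Σ_{j=1}^{p} |σ_{ij}|^q (σ_{ii} σ_{jj})^{(1−q)/2}. -/

import Mathlib

open Matrix BigOperators

/-- Spectral (operator) norm of a square real matrix (largest singular value). -/
noncomputable def specNorm {m : ℕ} (A : Matrix (Fin m) (Fin m) ℝ) : ℝ :=
  ‖Matrix.toEuclideanCLM (𝕜 := ℝ) A‖

lemma entry_sq_le {p : ℕ} {Su : Matrix (Fin p) (Fin p) ℝ} (hSu : Su.PosSemidef)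
    (i j : Fin p) : (Su i j) ^ 2 ≤ Su i i * Su j j := by
  have hsymm : ∀ a b, Su a b = Su b a := fun a b => by
    have := congrFun (congrFun hSu.1.symm a) b
    simpa [Matrix.conjTranspose_apply] using this
  have key : ∀ t : ℝ, 0 ≤ Su i i * (t * t) + (2 * Su i j) * t + Su j j := by
    intro t
    set v : Fin p → ℝ := t • (Pi.single i 1 : Fin p → ℝ) + Pi.single j 1 with hv
    have h := hSu.dotProduct_mulVec_nonneg v
    have hx : v ⬝ᵥ Su.mulVec v
        = Su i i * (t * t) + (2 * Su i j) * t + Su j j := by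
      simp [hv, Matrix.mulVec_add, Matrix.mulVec_smul, Matrix.mulVec_single,
        dotProduct_add, add_dotProduct, smul_dotProduct,
        dotProduct_smul, single_dotProduct, hsymm j i]
      ring
    simpa [hx] using h
  have hd := discrim_le_zero key
  have : (2 * Su i j) ^ 2 - 4 * (Su i i) * Su j j ≤ 0 := by
    simpa [discrim] using hd
  nlinarith [this]

/-- For a positive semidefinite `Su` and `q ∈ [0,1]`:
`‖Su‖ ≤ ‖Su‖₁ ≤ max_i ∑_j |σ_{ij}|^q (σ_{ii} σ_{jj})^{(1−q)/2}`,
where `‖·‖₁` is the maximum absolute column sum norm. -/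
theorem stmt7 (p : ℕ) (hp : 0 < p)
    (Su : Matrix (Fin p) (Fin p) ℝ) (hSu : Su.PosSemidef)
    (q : ℝ) (hq : q ∈ Set.Icc (0 : ℝ) 1) :
    specNorm Su ≤ (⨆ j, ∑ i, |Su i j|) ∧
    (⨆ j, ∑ i, |Su i j|)
      ≤ ⨆ i, ∑ j, |Su i j| ^ q * (Su i i * Su j j) ^ ((1 - q) / 2) := by
  haveI : Nonempty (Fin p) := Fin.pos_iff_nonempty.mp hp
  have hsymm : ∀ a b, Su a b = Su b a := fun a b => by
    have := congrFun (congrFun hSu.1.symm a) b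
    simpa [Matrix.conjTranspose_apply] using this
  set M : ℝ := ⨆ j, ∑ i, |Su i j| with hM
  have hbdd : BddAbove (Set.range fun j => ∑ i, |Su i j|) :=
    Set.Finite.bddAbove (Set.finite_range _)
  have hcol : ∀ j, (∑ i, |Su i j|) ≤ M := fun j => le_ciSup hbdd j
  have hM0 : 0 ≤ M :=
    le_trans (Finset.sum_nonneg fun i _ => abs_nonneg _) (hcol (Classical.arbitrary _))
  have hrow : ∀ i, (∑ j, |Su i j|) ≤ M := by
    intro i
    calc (∑ j, |Su i j|) = ∑ j, |Su j i| := by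
          exact Finset.sum_congr rfl fun j _ => by rw [hsymm i j]
      _ ≤ M := hcol i
  constructor
  · -- spectral norm bound
    rw [specNorm]
    apply ContinuousLinearMap.opNorm_le_bound _ hM0
    intro x
    have hnorm : ‖(Matrix.toEuclideanCLM (𝕜 := ℝ) Su) x‖
        = Real.sqrt (∑ i, (Su.mulVec (fun k => x k) i) ^ 2) := by
      rw [EuclideanSpace.norm_eq]
      congr 1
      refine Finset.sum_congr rfl fun i _ => ?_
      have : (Matrix.toEuclideanCLM (𝕜 := ℝ) Su) x i = Su.mulVec (fun k => x k) i := rfl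
      rw [this, Real.norm_eq_abs, sq_abs]
    have hxnorm : ‖x‖ = Real.sqrt (∑ j, (x j) ^ 2) := by
      rw [EuclideanSpace.norm_eq]
      congr 1
      exact Finset.sum_congr rfl fun j _ => by rw [Real.norm_eq_abs, sq_abs]
    rw [hnorm, hxnorm]
    have key : (∑ i, (Su.mulVec (fun k => x k) i) ^ 2) ≤ M ^ 2 * ∑ j, (x j) ^ 2 := by
      have step1 : ∀ i, (Su.mulVec (fun k => x k) i) ^ 2
          ≤ (∑ j, |Su i j|) * (∑ j, |Su i j| * (x j) ^ 2) := by
        intro i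
        have habs : |Su.mulVec (fun k => x k) i| ≤ ∑ j, |Su i j| * |x j| := by
          rw [Matrix.mulVec, dotProduct]
          calc |∑ j, Su i j * x j| ≤ ∑ j, |Su i j * x j| := Finset.abs_sum_le_sum_abs _ _
            _ = ∑ j, |Su i j| * |x j| := Finset.sum_congr rfl fun j _ => abs_mul _ _
        have hcs : (∑ j, |Su i j| * |x j|) ^ 2
            ≤ (∑ j, |Su i j|) * (∑ j, |Su i j| * (x j) ^ 2) := by
          apply Finset.sum_sq_le_sum_mul_sum_of_sq_eq_mul
          · exact fun j _ => abs_nonneg _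
          · exact fun j _ => mul_nonneg (abs_nonneg _) (sq_nonneg _)
          · intro j _
            have h2 : |Su i j| * (|Su i j| * x j ^ 2) = |Su i j| ^ 2 * x j ^ 2 := by ring
            rw [mul_pow, sq_abs (x j), h2]
        calc (Su.mulVec (fun k => x k) i) ^ 2 = |Su.mulVec (fun k => x k) i| ^ 2 := (sq_abs _).symm
          _ ≤ (∑ j, |Su i j| * |x j|) ^ 2 := by
              apply pow_le_pow_left₀ (abs_nonneg _) habs
          _ ≤ _ := hcs
      calc (∑ i, (Su.mulVec (fun k => x k) i) ^ 2)
          ≤ ∑ i, (∑ j, |Su i j|) * (∑ j, |Su i j| * (x j) ^ 2) :=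
            Finset.sum_le_sum fun i _ => step1 i
        _ ≤ ∑ i, M * (∑ j, |Su i j| * (x j) ^ 2) := by
            refine Finset.sum_le_sum fun i _ => ?_
            apply mul_le_mul_of_nonneg_right (hrow i)
            exact Finset.sum_nonneg fun j _ => mul_nonneg (abs_nonneg _) (sq_nonneg _)
        _ = M * ∑ j, (∑ i, |Su i j|) * (x j) ^ 2 := by
            rw [← Finset.mul_sum, Finset.sum_comm]
            congr 1
            exact Finset.sum_congr rfl fun j _ => by rw [Finset.sum_mul]
        _ ≤ M * ∑ j, M * (x j) ^ 2 := by
            apply mul_le_mul_of_nonneg_left _ hM0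
            exact Finset.sum_le_sum fun j _ =>
              mul_le_mul_of_nonneg_right (hcol j) (sq_nonneg _)
        _ = M ^ 2 * ∑ j, (x j) ^ 2 := by rw [← Finset.mul_sum]; ring
    calc Real.sqrt (∑ i, (Su.mulVec (fun k => x k) i) ^ 2)
        ≤ Real.sqrt (M ^ 2 * ∑ j, (x j) ^ 2) := Real.sqrt_le_sqrt key
      _ = M * Real.sqrt (∑ j, (x j) ^ 2) := by
          rw [Real.sqrt_mul (sq_nonneg M), Real.sqrt_sq hM0]
  · -- L1 norm bound
    obtain ⟨hq0, hq1⟩ := hq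
    apply ciSup_le
    intro j
    have hbdd2 : BddAbove (Set.range fun i =>
        ∑ l, |Su i l| ^ q * (Su i i * Su l l) ^ ((1 - q) / 2)) :=
      Set.Finite.bddAbove (Set.finite_range _)
    refine le_trans ?_ (le_ciSup hbdd2 j)
    apply Finset.sum_le_sum
    intro i _
    rw [hsymm i j]
    set a := Su j i with ha
    set d := Su j j * Su i i with hd
    have hsq : a ^ 2 ≤ d := by
      have := entry_sq_le hSu j i
      simpa [ha, hd] using this
    have hd0 : 0 ≤ d := le_trans (sq_nonneg a) hsq
    have habs : |a| ≤ Real.sqrt d := by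
      rw [← Real.sqrt_sq_eq_abs]
      exact Real.sqrt_le_sqrt hsq
    rcases eq_or_lt_of_le (abs_nonneg a) with h0 | hpos
    · -- a = 0
      rw [← h0]
      positivity
    · -- |a| > 0
      have expand : |a| = |a| ^ q * |a| ^ (1 - q) := by
        rw [← Real.rpow_add hpos]
        norm_num
      calc |a| = |a| ^ q * |a| ^ (1 - q) := expand
        _ ≤ |a| ^ q * d ^ ((1 - q) / 2) := by
            apply mul_le_mul_of_nonneg_left _ (Real.rpow_nonneg (abs_nonneg a) q)
            calc |a| ^ (1 - q) ≤ (Real.sqrt d) ^ (1 - q) :=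
                  Real.rpow_le_rpow (abs_nonneg a) habs (by linarith)
              _ = d ^ ((1 - q) / 2) := by
                  rw [Real.sqrt_eq_rpow, ← Real.rpow_mul hd0]
                  ring_nf
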